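/- For nonnegative integers i and real A, the function ψ(x) = cosh(x/2)^{1/2 - A} · P_i^{(-1/2, -A)}(cosh x) satisfies -ψ'' + (1/4)(1/4 - A²)·sech²(x/2)·ψ = -(A/2 - i - 1/4)²·ψ on ℝ. -/

import Mathlib

/-- The Jacobi polynomial
P_n^{(α,β)}(x) = ∑_{s=0}^n (1/(s!(n-s)!)) (∏_{j=s+1}^n (α+j)) (∏_{j=1}^s (α+β+n+j)) ((x-1)/2)^s. -/
noncomputable def jacobiP (n : ℕ) (α β : ℝ) (x : ℝ) : ℝ :=
  ∑ s ∈ Finset.range (n + 1),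
    (1 / ((Nat.factorial s : ℝ) * (Nat.factorial (n - s) : ℝ)))
      * (∏ j ∈ Finset.Icc (s + 1) n, (α + (j : ℝ)))
      * (∏ j ∈ Finset.Icc 1 s, (α + β + (n : ℝ) + (j : ℝ)))
      * ((x - 1) / 2) ^ s

namespace PTaux
open Real Finset

noncomputable def F (p : ℝ) (s : ℕ) (x : ℝ) : ℝ :=
  Real.cosh (x/2) ^ p * (Real.sinh (x/2) ^ 2) ^ s

noncomputable def F1 (p : ℝ) (s : ℕ) (x : ℝ) : ℝ :=
  (p/2) * Real.cosh (x/2) ^ (p-1) * Real.sinh (x/2) * (Real.sinh (x/2) ^ 2) ^ s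
  + (s : ℝ) * Real.cosh (x/2) ^ (p+1) * Real.sinh (x/2) * (Real.sinh (x/2) ^ 2) ^ (s-1)

noncomputable def F2 (p : ℝ) (s : ℕ) (x : ℝ) : ℝ :=
  (p*(p-1)/4) * Real.cosh (x/2) ^ (p-2) * Real.sinh (x/2)^2 * (Real.sinh (x/2)^2) ^ s
  + (p/4) * Real.cosh (x/2) ^ p * (Real.sinh (x/2)^2) ^ s
  + (p*(s:ℝ)/2) * Real.cosh (x/2) ^ p * Real.sinh (x/2)^2 * (Real.sinh (x/2)^2) ^ (s-1)
  + ((s:ℝ)*(p+1)/2) * Real.cosh (x/2) ^ p * Real.sinh (x/2)^2 * (Real.sinh (x/2)^2) ^ (s-1)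
  + ((s:ℝ)/2) * Real.cosh (x/2) ^ (p+2) * (Real.sinh (x/2)^2) ^ (s-1)
  + ((s:ℝ)*((s-1 : ℕ):ℝ)) * Real.cosh (x/2) ^ (p+2) * Real.sinh (x/2)^2 * (Real.sinh (x/2)^2) ^ (s-2)

lemma cosh_pow_split (p : ℝ) (x : ℝ) (k : ℕ) :
    Real.cosh (x/2) ^ (p - 2 + (k:ℝ)) = Real.cosh (x/2) ^ (p-2) * Real.cosh (x/2) ^ k := by
  rw [Real.rpow_add (Real.cosh_pos _), Real.rpow_natCast]

lemma e1 (p x : ℝ) : Real.cosh (x/2) ^ (p-1)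
    = Real.cosh (x/2) ^ (p-2) * Real.cosh (x/2) ^ (1:ℕ) := by
  rw [← cosh_pow_split]
  congr 1
  push_cast; ring

lemma e0 (p x : ℝ) : Real.cosh (x/2) ^ p
    = Real.cosh (x/2) ^ (p-2) * Real.cosh (x/2) ^ (2:ℕ) := by
  rw [← cosh_pow_split]
  congr 1
  push_cast; ring

lemma e2 (p x : ℝ) : Real.cosh (x/2) ^ (p+1)
    = Real.cosh (x/2) ^ (p-2) * Real.cosh (x/2) ^ (3:ℕ) := by
  rw [← cosh_pow_split]
  congr 1
  push_cast; ring

lemma e3 (p x : ℝ) : Real.cosh (x/2) ^ (p+2)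
    = Real.cosh (x/2) ^ (p-2) * Real.cosh (x/2) ^ (4:ℕ) := by
  rw [← cosh_pow_split]
  congr 1
  push_cast; ring

lemma hasDerivAt_F (p : ℝ) (s : ℕ) (x : ℝ) :
    HasDerivAt (fun y => F p s y) (F1 p s x) x := by
  have hx2 : HasDerivAt (fun y : ℝ => y/2) (1/2) x := (hasDerivAt_id x).div_const 2
  have hc := hx2.cosh
  have ht := hx2.sinh
  have hcp := hc.rpow_const (p := p) (Or.inl (Real.cosh_pos (x/2)).ne')
  have hT := (ht.pow 2).pow s
  have hF := hcp.mul hT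
  unfold F F1
  convert hF using 1
  case e'_4 => rfl
  case e'_5 => rfl
  case e'_8 => rfl
  simp only [Pi.pow_apply, Pi.mul_apply]
  rw [show p - 1 = p - 2 + ((1:ℕ):ℝ) by push_cast; ring] at *
  rw [cosh_pow_split, e2 p x, e0 p x]
  ring

lemma hasDerivAt_F1 (p : ℝ) (s : ℕ) (x : ℝ) :
    HasDerivAt (fun y => F1 p s y) (F2 p s x) x := by
  have hx2 : HasDerivAt (fun y : ℝ => y/2) (1/2) x := (hasDerivAt_id x).div_const 2
  have hc := hx2.cosh
  have ht := hx2.sinh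
  have hcp1 := hc.rpow_const (p := p - 1) (Or.inl (Real.cosh_pos (x/2)).ne')
  have hcp2 := hc.rpow_const (p := p + 1) (Or.inl (Real.cosh_pos (x/2)).ne')
  have hTs := (ht.pow 2).pow s
  have hTs1 := (ht.pow 2).pow (s - 1)
  have hA := (((hcp1.const_mul (p/2)).mul ht).mul hTs).add
    (((hcp2.const_mul (s:ℝ)).mul ht).mul hTs1)
  unfold F1 F2
  convert hA using 1
  case e'_4 => rfl
  case e'_5 => rfl
  case e'_8 => rfl
  simp only [Pi.pow_apply, Pi.mul_apply]
  rw [show p - 1 - 1 = p - 2 by ring, show p + 1 - 1 = p - 2 + ((2:ℕ):ℝ) by push_cast; ring,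
    show s - 1 - 1 = s - 2 from by omega]
  rw [cosh_pow_split, e1 p x, e2 p x, e3 p x, e0 p x]
  ring


lemma key_alg (A : ℝ) (s : ℕ) (x : ℝ) :
    -(F2 (1/2 - A) s x) + (1/4)*(1/4 - A^2) * (1/Real.cosh (x/2))^2 * F (1/2 - A) s x
    = -(1/4)*((1/2 - A) + 2*(s:ℝ))^2 * F (1/2 - A) s x
      - ((s:ℝ)*(2*(s:ℝ)-1)/2) * F (1/2 - A) (s-1) x := by
  have hpot : (1/Real.cosh (x/2))^2 = 1/(Real.sinh (x/2)^2 + 1) := by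
    rw [div_pow, one_pow, Real.cosh_sq]
  have h4 : Real.cosh (x/2) ^ (4:ℕ) = (Real.sinh (x/2)^2 + 1)^2 := by
    rw [show (4:ℕ) = 2*2 from rfl, pow_mul, Real.cosh_sq]
  have hne : Real.sinh (x/2)^2 + 1 ≠ 0 := by positivity
  unfold F F2
  rw [hpot, e0 (1/2-A) x, e3 (1/2-A) x, h4, Real.cosh_sq]
  rcases s with _ | _ | k
  · push_cast
    field_simp
    ring
  · push_cast
    field_simp
    ring
  · push_cast [show k+1+1-1 = k+1 from rfl, show k+1+1-2 = k from rfl]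
    field_simp
    ring


noncomputable def a (i : ℕ) (A : ℝ) (s : ℕ) : ℝ :=
  (1 / ((Nat.factorial s : ℝ) * (Nat.factorial (i - s) : ℝ)))
    * (∏ j ∈ Finset.Icc (s + 1) i, (-(1:ℝ)/2 + (j : ℝ)))
    * (∏ j ∈ Finset.Icc 1 s, (-(1:ℝ)/2 + -A + (i : ℝ) + (j : ℝ)))

lemma coeff_rec (i : ℕ) (A : ℝ) (s : ℕ) (hs : s < i) :
    a i A (s+1) * (((s:ℝ)+1)*(2*(s:ℝ)+1))
      = a i A s * (2*((i:ℝ)-(s:ℝ))*(1/2 - A + (i:ℝ) + (s:ℝ))) := by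
  unfold a
  have hins : Finset.Icc (s+1) i = insert (s+1) (Finset.Icc (s+1+1) i) := by
    ext j; simp only [Finset.mem_Icc, Finset.mem_insert]; omega
  rw [hins, Finset.prod_insert (by simp), Finset.prod_Icc_succ_top (Nat.le_add_left 1 s)]
  rw [show i - s = (i - (s+1)) + 1 from by omega, Nat.factorial_succ (i - (s+1)),
    Nat.factorial_succ s]
  have e1 : (Nat.factorial s : ℝ) ≠ 0 := Nat.cast_ne_zero.mpr (Nat.factorial_ne_zero _)
  have e2 : (Nat.factorial (i - (s+1)) : ℝ) ≠ 0 := Nat.cast_ne_zero.mpr (Nat.factorial_ne_zero _)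
  have hcast : ((i - (s+1) : ℕ) : ℝ) = (i:ℝ) - (s:ℝ) - 1 := by
    have h := Nat.cast_sub (show s+1 ≤ i by omega) (R := ℝ)
    push_cast at h ⊢
    linarith
  have e3 : (i:ℝ) - (s:ℝ) ≠ 0 := by
    have : (s:ℝ) < (i:ℝ) := by exact_mod_cast hs
    linarith
  push_cast [hcast]
  rw [show (i:ℝ) - s - 1 + 1 = i - s by ring]
  field_simp
  ring

end PTaux



open PTaux

/-- ψ(x) = cosh(x/2)^{1/2-A}·P_i^{(-1/2,-A)}(cosh x) satisfies
-ψ'' + ¼(¼ - A²)sech²(x/2)·ψ = -(A/2 - i - 1/4)²·ψ on ℝ. -/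
theorem poschl_teller_even_bound_states (i : ℕ) (A : ℝ)
    (ψ : ℝ → ℝ)
    (hψ : ψ = fun x => Real.cosh (x / 2) ^ ((1 : ℝ) / 2 - A)
        * jacobiP i (-(1 : ℝ) / 2) (-A) (Real.cosh x)) :
    ∀ x : ℝ,
      -(deriv (deriv ψ) x)
          + (1 / 4) * (1 / 4 - A ^ 2) * (1 / Real.cosh (x / 2)) ^ 2 * ψ x
        = -((A / 2 - (i : ℝ) - 1 / 4) ^ 2) * ψ x := by
  subst hψ
  have hfun : (fun x => Real.cosh (x / 2) ^ ((1 : ℝ) / 2 - A)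
        * jacobiP i (-(1 : ℝ) / 2) (-A) (Real.cosh x))
      = fun x => ∑ s ∈ Finset.range (i+1), a i A s * F ((1:ℝ)/2 - A) s x := by
    funext y
    unfold jacobiP a F
    rw [Finset.mul_sum]
    refine Finset.sum_congr rfl fun s _ => ?_
    have hch : (Real.cosh y - 1)/2 = Real.sinh (y/2)^2 := by
      have h := Real.cosh_two_mul (y/2)
      rw [show 2*(y/2) = y by ring] at h
      rw [h, Real.cosh_sq]; ring
    rw [hch]
    ring
  rw [hfun]
  intro x
  have hD1 : ∀ y : ℝ, HasDerivAt
      (fun x => ∑ s ∈ Finset.range (i+1), a i A s * F ((1:ℝ)/2 - A) s x)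
      (∑ s ∈ Finset.range (i+1), a i A s * F1 ((1:ℝ)/2 - A) s y) y :=
    fun y => HasDerivAt.fun_sum fun s _ => (hasDerivAt_F _ s y).const_mul _
  have hD2 : ∀ y : ℝ, HasDerivAt
      (fun x => ∑ s ∈ Finset.range (i+1), a i A s * F1 ((1:ℝ)/2 - A) s x)
      (∑ s ∈ Finset.range (i+1), a i A s * F2 ((1:ℝ)/2 - A) s y) y :=
    fun y => HasDerivAt.fun_sum fun s _ => (hasDerivAt_F1 _ s y).const_mul _
  have hdd : deriv (deriv (fun x => ∑ s ∈ Finset.range (i+1),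
        a i A s * F ((1:ℝ)/2 - A) s x)) x
      = ∑ s ∈ Finset.range (i+1), a i A s * F2 ((1:ℝ)/2 - A) s x := by
    have h1 : deriv (fun x => ∑ s ∈ Finset.range (i+1), a i A s * F ((1:ℝ)/2 - A) s x)
        = fun y => ∑ s ∈ Finset.range (i+1), a i A s * F1 ((1:ℝ)/2 - A) s y :=
      funext fun y => (hD1 y).deriv
    rw [h1]
    exact (hD2 x).deriv
  beta_reduce
  rw [hdd]
  have hkey : ∀ s ∈ Finset.range (i+1),
      (1/4) * (1/4 - A^2) * (1/Real.cosh (x/2))^2 * (a i A s * F ((1:ℝ)/2 - A) s x)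
        - a i A s * F2 ((1:ℝ)/2 - A) s x
      = a i A s * (-(1/4)*((1/2 - A) + 2*(s:ℝ))^2) * F ((1:ℝ)/2 - A) s x
        - a i A s * ((s:ℝ)*(2*(s:ℝ)-1)/2) * F ((1:ℝ)/2 - A) (s-1) x :=
    fun s _ => by linear_combination (a i A s) * key_alg A s x
  have hshift : ∑ s ∈ Finset.range (i+1),
      a i A s * ((s:ℝ)*(2*(s:ℝ)-1)/2) * F ((1:ℝ)/2 - A) (s-1) x
      = ∑ s ∈ Finset.range i,
        a i A (s+1) * (((s:ℝ)+1)*(2*(s:ℝ)+1)/2) * F ((1:ℝ)/2 - A) s x := by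
    rw [Finset.sum_range_succ']
    norm_num
    exact Finset.sum_congr rfl fun k _ => by
      push_cast [Nat.add_sub_cancel]
      ring_nf
  have hrec : ∀ s ∈ Finset.range i,
      a i A s * (-(1/4)*((1/2 - A) + 2*(s:ℝ))^2) * F ((1:ℝ)/2 - A) s x
        - a i A (s+1) * (((s:ℝ)+1)*(2*(s:ℝ)+1)/2) * F ((1:ℝ)/2 - A) s x
      = (-(1/4)*((1/2 - A) + 2*(i:ℝ))^2) * (a i A s * F ((1:ℝ)/2 - A) s x) :=
    fun s hs => by
      linear_combination (-(F ((1:ℝ)/2 - A) s x)/2) * coeff_rec i A s (Finset.mem_range.mp hs)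
  calc -(∑ s ∈ Finset.range (i+1), a i A s * F2 ((1:ℝ)/2 - A) s x)
        + (1/4) * (1/4 - A^2) * (1/Real.cosh (x/2))^2
          * ∑ s ∈ Finset.range (i+1), a i A s * F ((1:ℝ)/2 - A) s x
      = ∑ s ∈ Finset.range (i+1),
          ((1/4) * (1/4 - A^2) * (1/Real.cosh (x/2))^2 * (a i A s * F ((1:ℝ)/2 - A) s x)
            - a i A s * F2 ((1:ℝ)/2 - A) s x) := by
        rw [Finset.mul_sum, neg_add_eq_sub, ← Finset.sum_sub_distrib]
    _ = ∑ s ∈ Finset.range (i+1),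
          (a i A s * (-(1/4)*((1/2 - A) + 2*(s:ℝ))^2) * F ((1:ℝ)/2 - A) s x
            - a i A s * ((s:ℝ)*(2*(s:ℝ)-1)/2) * F ((1:ℝ)/2 - A) (s-1) x) :=
        Finset.sum_congr rfl hkey
    _ = (∑ s ∈ Finset.range i, a i A s * (-(1/4)*((1/2 - A) + 2*(s:ℝ))^2) * F ((1:ℝ)/2 - A) s x
          + a i A i * (-(1/4)*((1/2 - A) + 2*(i:ℝ))^2) * F ((1:ℝ)/2 - A) i x)
        - ∑ s ∈ Finset.range i,
            a i A (s+1) * (((s:ℝ)+1)*(2*(s:ℝ)+1)/2) * F ((1:ℝ)/2 - A) s x := by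
        rw [Finset.sum_sub_distrib, hshift, Finset.sum_range_succ]
    _ = ∑ s ∈ Finset.range i,
          (a i A s * (-(1/4)*((1/2 - A) + 2*(s:ℝ))^2) * F ((1:ℝ)/2 - A) s x
            - a i A (s+1) * (((s:ℝ)+1)*(2*(s:ℝ)+1)/2) * F ((1:ℝ)/2 - A) s x)
        + a i A i * (-(1/4)*((1/2 - A) + 2*(i:ℝ))^2) * F ((1:ℝ)/2 - A) i x := by
        rw [Finset.sum_sub_distrib]; ring
    _ = ∑ s ∈ Finset.range i,
          (-(1/4)*((1/2 - A) + 2*(i:ℝ))^2) * (a i A s * F ((1:ℝ)/2 - A) s x)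
        + a i A i * (-(1/4)*((1/2 - A) + 2*(i:ℝ))^2) * F ((1:ℝ)/2 - A) i x := by
        rw [Finset.sum_congr rfl hrec]
    _ = -((A / 2 - (i:ℝ) - 1/4)^2) * ∑ s ∈ Finset.range (i+1), a i A s * F ((1:ℝ)/2 - A) s x := by
        rw [Finset.mul_sum, Finset.sum_range_succ]
        have hl : ∀ s : ℕ, -((A / 2 - (i:ℝ) - 1/4)^2) * (a i A s * F ((1:ℝ)/2 - A) s x)
            = (-(1/4)*((1/2 - A) + 2*(i:ℝ))^2) * (a i A s * F ((1:ℝ)/2 - A) s x) :=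
          fun s => by ring
        rw [Finset.sum_congr rfl fun s _ => hl s, hl i]
        ring
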